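/- arXiv:1803.03583 — 3 statements merged into one kernel-verified Lean document; each statement's English description precedes it below -/
import Mathlib

section
/- Let R be a full Suslin tree and let A be a club-minimal Aronszajn tree. Then for no s ∈ R and no club D does there exist a level-preserving order-preserving injection from R_s↾D into A. (Claim established inside the proof of the paper's Main Lemma.) -/
noncomputable section

open Set

/-- The first uncountable ordinal `ω₁`. -/
def omega_1 : Ordinal := (Cardinal.aleph 1).ord

universe v

/-- A tree structure on a partial order `T`: a height function witnessing that the set of
predecessors of each node is well-ordered, with `ht t` its order type.  The fields say that
the predecessors of a node form a chain, that heights are strictly increasing, and that a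
node of height `α` has (necessarily unique) predecessors of every height `ξ < α`. -/
structure TreeHt (T : Type*) [PartialOrder T] where
  ht : T → Ordinal.{v}
  chain_below : ∀ t : T, IsChain (· ≤ ·) {s : T | s < t}
  ht_lt : ∀ {s t : T}, s < t → ht s < ht t
  exists_below : ∀ t : T, ∀ ξ < ht t, ∃ s, s < t ∧ ht s = ξ

variable {T S : Type*} [PartialOrder T] [PartialOrder S]

/-- The `α`-th level of a tree. -/
def TreeHt.level (tr : TreeHt T) (α : Ordinal) : Set T := {t | tr.ht t = α}

/-- An `ℵ₁`-tree: height `ω₁` (all heights are countable and all countable levels are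
nonempty) and all levels countable. -/
def IsAleph1Tree (tr : TreeHt T) : Prop :=
  (∀ t : T, tr.ht t < omega_1) ∧
  (∀ α < omega_1, (tr.level α).Nonempty) ∧
  (∀ α : Ordinal, (tr.level α).Countable)

/-- An Aronszajn tree: an `ℵ₁`-tree with no uncountable chain. -/
def IsAronszajn (tr : TreeHt T) : Prop :=
  IsAleph1Tree tr ∧ ∀ c : Set T, IsChain (· ≤ ·) c → c.Countable

/-- A Suslin tree: an Aronszajn tree with no uncountable antichain. -/
def IsSuslin (tr : TreeHt T) : Prop :=
  IsAronszajn tr ∧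
  ∀ a : Set T, (∀ x ∈ a, ∀ y ∈ a, x ≠ y → ¬ (x ≤ y) ∧ ¬ (y ≤ x)) → a.Countable

/-- The carrier of the derived tree `R_{a 0} ⊗ … ⊗ R_{a n}`: tuples lying above the `a i`
with all coordinates of equal height, ordered coordinatewise. -/
def derivedTreeSet (tr : TreeHt T) {n : ℕ} (a : Fin (n + 1) → T) :
    Set (Fin (n + 1) → T) :=
  {f | (∀ i, a i ≤ f i) ∧ ∃ ε, ∀ i, tr.ht (f i) = ε}

/-- A full Suslin tree: a Suslin tree all of whose derived trees (with their canonical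
height function) are Suslin. -/
def IsFullSuslin (tr : TreeHt T) : Prop :=
  IsSuslin tr ∧
  ∀ (n : ℕ) (δ : Ordinal), δ < omega_1 →
    ∀ a : Fin (n + 1) → T, Function.Injective a → (∀ i, tr.ht (a i) = δ) →
      ∃ dtr : TreeHt ↥(derivedTreeSet tr a),
        (∀ f : ↥(derivedTreeSet tr a), dtr.ht f = tr.ht (f.1 0) - δ) ∧ IsSuslin dtr

/-- A club (closed unbounded) subset of `ω₁`. -/
def IsClubOmega1 (C : Set Ordinal) : Prop :=
  (∀ α ∈ C, α < omega_1) ∧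
  (∀ α < omega_1, ∃ β ∈ C, α ≤ β) ∧
  (∀ α < omega_1, α ≠ 0 → (∀ β < α, ∃ γ ∈ C, β < γ ∧ γ < α) → α ∈ C)

/-- `f` is an order preserving injection of `T↾C` into `S` (only the values of `f` on
`T↾C = {t | ht t ∈ C}` are constrained). -/
def ClubEmbedding (trT : TreeHt T) (trS : TreeHt S) (C : Set Ordinal) (f : T → S) : Prop :=
  (∀ t₁ t₂ : T, trT.ht t₁ ∈ C → trT.ht t₂ ∈ C → t₁ < t₂ → f t₁ < f t₂) ∧
  (∀ t₁ t₂ : T, trT.ht t₁ ∈ C → trT.ht t₂ ∈ C → f t₁ = f t₂ → t₁ = t₂)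

/-- `T` club-embeds into `S`. -/
def ClubEmbeds (trT : TreeHt T) (trS : TreeHt S) : Prop :=
  ∃ C : Set Ordinal, IsClubOmega1 C ∧ ∃ f : T → S, ClubEmbedding trT trS C f

/-- A (downward closed, pruned) subtree of an `ℵ₁`-tree. -/
def IsSubtree (tr : TreeHt T) (S' : Set T) : Prop :=
  (∀ s ∈ S', ∀ t, t ≤ s → t ∈ S') ∧
  (∀ s ∈ S', ∀ β, tr.ht s ≤ β → β < omega_1 → ∃ t ∈ S', s ≤ t ∧ tr.ht t = β)

/-- A club-minimal tree: it club-embeds into each of its subtrees. -/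
def ClubMinimal (tr : TreeHt T) : Prop :=
  ∀ S' : Set T, IsSubtree tr S' →
    ∃ C : Set Ordinal, IsClubOmega1 C ∧ ∃ f : T → T,
      (∀ t, tr.ht t ∈ C → f t ∈ S') ∧ ClubEmbedding tr tr C f

/-- A ladder system on `ω₁`: for each countable limit `α`, `η α` is a cofinal subset of `α`
of order type `ω`. -/
def IsLadderSystem (η : Ordinal → Set Ordinal) : Prop :=
  ∀ α, α < omega_1 → Order.IsSuccLimit α →
    (∀ ξ ∈ η α, ξ < α) ∧ (∀ β < α, ∃ ξ ∈ η α, β < ξ) ∧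
    (∀ β < α, {ξ ∈ η α | ξ ≤ β}.Finite)

/-- `f : S' → 2` is an `A`-uniformization of the constant 2-colouring of `η` coded by `c`
(the colour on the ladder `η α` being constantly `c α`): `S'` is a subtree and for every
node `t` of `S'` of limit height `α`, `f (t↾ξ) = c α` for all but finitely many `ξ ∈ η α`. -/
def IsUniformization (tr : TreeHt T) (η : Ordinal → Set Ordinal)
    (c : Ordinal → Fin 2) (S' : Set T) (f : T → Fin 2) : Prop :=
  IsSubtree tr S' ∧
  ∀ α, α < omega_1 → Order.IsSuccLimit α → ∀ t ∈ S', tr.ht t = α →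
    {ξ ∈ η α | ∃ s, s < t ∧ tr.ht s = ξ ∧ f s ≠ c α}.Finite

/-- The linear order `ω₁` (the set of countable ordinals). -/
abbrev Omega1Type : Type 1 := {o : Ordinal // o < omega_1}

/-- A minimal uncountable linear order: uncountable, and order-embeds into each of its
uncountable suborders. -/
def MinimalUncountableLinearOrder (L : Type*) [LinearOrder L] : Prop :=
  ¬ Countable L ∧ ∀ S' : Set L, ¬ S'.Countable → Nonempty (L ↪o ↥S')


section AuxLemmas


universe u

lemma lt_add_one_ordinal (o : Ordinal) : o < o + 1 := by
  rw [Ordinal.add_one_eq_succ]; exact Order.lt_succ o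

lemma succ_lt_omega1 {o : Ordinal.{u}} (h : o < omega_1) : o + 1 < omega_1 := by
  rw [Ordinal.add_one_eq_succ]
  exact (Cardinal.isSuccLimit_ord (Cardinal.aleph0_le_aleph 1)).succ_lt h

lemma add_lt_omega1 {a b : Ordinal.{u}} (ha : a < omega_1) (hb : b < omega_1) :
    a + b < omega_1 := by
  have ha' : a.card < Cardinal.aleph 1 := Cardinal.lt_ord.1 ha
  have hb' : b.card < Cardinal.aleph 1 := Cardinal.lt_ord.1 hb
  refine Cardinal.lt_ord.2 ?_
  rw [Ordinal.card_add]
  exact Cardinal.add_lt_of_lt (Cardinal.aleph0_le_aleph 1) ha' hb'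

lemma sup_lt_omega1 {f : ℕ → Ordinal.{u}} (h : ∀ n, f n < omega_1) :
    (⨆ n, f n) < omega_1 := by
  refine Cardinal.iSup_lt_ord_lift_of_isRegular Cardinal.isRegular_aleph_one ?_ h
  rw [Cardinal.mk_nat, Cardinal.lift_aleph0]
  exact Cardinal.aleph0_lt_aleph_one

lemma countable_Iio_of_lt_omega1 {o : Ordinal.{u}} (h : o < omega_1) :
    (Set.Iio o).Countable := by
  rw [Cardinal.countable_iff_lt_aleph_one, Ordinal.mk_Iio_ordinal]
  have h1 : o.card < Cardinal.aleph 1 := Cardinal.lt_ord.1 h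
  calc Cardinal.lift.{u+1} o.card < Cardinal.lift.{u+1} (Cardinal.aleph 1) :=
        Cardinal.lift_lt.2 h1
    _ = Cardinal.aleph 1 := by
        rw [Cardinal.lift_aleph, Ordinal.lift_one]

lemma not_countable_Iio_omega1 : ¬ (Set.Iio (omega_1 : Ordinal.{u})).Countable := by
  rw [Cardinal.countable_iff_lt_aleph_one, Ordinal.mk_Iio_ordinal]
  intro hc
  rw [show (omega_1 : Ordinal.{u}).card = Cardinal.aleph 1 from Cardinal.card_ord _,
    Cardinal.lift_aleph, Ordinal.lift_one] at hc
  exact lt_irrefl _ hc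

lemma not_countable_of_inj {X : Type*} (S : Set X)
    (ι : (Set.Iio (omega_1 : Ordinal.{u})) → X)
    (hmem : ∀ o, ι o ∈ S) (hinj : Function.Injective ι) : ¬ S.Countable := by
  intro hc
  haveI : Countable S := hc.to_subtype
  have : Countable (Set.Iio (omega_1 : Ordinal.{u})) := by
    exact Function.Injective.countable
      (f := fun o => (⟨ι o, hmem o⟩ : S))
      (fun a b hab => hinj (congrArg Subtype.val hab))
  exact not_countable_Iio_omega1 (Set.countable_coe_iff.1 this)

namespace TreeHt

variable {T : Type*} [PartialOrder T] (tr : TreeHt T)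

lemma ht_le_of_le {x y : T} (h : x ≤ y) : tr.ht x ≤ tr.ht y := by
  rcases eq_or_lt_of_le h with rfl | h'
  · exact le_rfl
  · exact (tr.ht_lt h').le

lemma eq_of_le_of_ht_le {x y : T} (h : x ≤ y) (hh : tr.ht y ≤ tr.ht x) : x = y := by
  rcases eq_or_lt_of_le h with rfl | h'
  · rfl
  · exact absurd (tr.ht_lt h') (not_lt.2 hh)

lemma lt_of_le_of_ht_lt {x y : T} (h : x ≤ y) (hh : tr.ht x < tr.ht y) : x < y :=
  lt_of_le_of_ne h (by rintro rfl; exact lt_irrefl _ hh)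

lemma le_of_le_le_ht_le {x y t : T} (hx : x ≤ t) (hy : y ≤ t)
    (hh : tr.ht x ≤ tr.ht y) : x ≤ y := by
  rcases eq_or_lt_of_le hy with rfl | hy'
  · exact hx
  rcases eq_or_lt_of_le hx with rfl | hx'
  · exact absurd (tr.ht_lt hy') (not_lt.2 hh)
  by_cases hxy : x = y
  · exact hxy.le
  rcases tr.chain_below t hx' hy' hxy with h' | h'
  · exact h'
  · exact (tr.eq_of_le_of_ht_le h' hh).symm.le

lemma eq_of_le_le_ht_eq {x y t : T} (hx : x ≤ t) (hy : y ≤ t)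
    (hh : tr.ht x = tr.ht y) : x = y :=
  le_antisymm (tr.le_of_le_le_ht_le hx hy hh.le) (tr.le_of_le_le_ht_le hy hx hh.ge)

lemma comparable_of_le_le (tr : TreeHt T) {x y t : T} (hx : x ≤ t) (hy : y ≤ t) : x ≤ y ∨ y ≤ x := by
  rcases le_total (tr.ht x) (tr.ht y) with h | h
  · exact Or.inl (tr.le_of_le_le_ht_le hx hy h)
  · exact Or.inr (tr.le_of_le_le_ht_le hy hx h)

lemma exists_le_ht (t : T) {ξ : Ordinal} (h : ξ ≤ tr.ht t) :
    ∃ x, x ≤ t ∧ tr.ht x = ξ := by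
  rcases eq_or_lt_of_le h with h' | h'
  · exact ⟨t, le_rfl, h'.symm⟩
  · obtain ⟨x, hx, hx'⟩ := tr.exists_below t ξ h'
    exact ⟨x, hx.le, hx'⟩

end TreeHt

lemma club_sup_mem {E : Set Ordinal.{u}} (hE : IsClubOmega1 E) (e : ℕ → Ordinal.{u})
    (hlt : ∀ n, e n < omega_1) (hmono : ∀ n, e n < e (n + 1))
    (hmem : ∀ n, ∃ z, z ∈ E ∧ e n ≤ z ∧ z ≤ e (n + 1)) :
    (⨆ n, e n) ∈ E ∧ (⨆ n, e n) < omega_1 := by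
  have hsup_lt : (⨆ n, e n) < omega_1 := sup_lt_omega1 hlt
  have hle : ∀ n, e n ≤ ⨆ n, e n := fun n => Ordinal.le_iSup e n
  have hlt' : ∀ n, e n < ⨆ n, e n := fun n => lt_of_lt_of_le (hmono n) (hle (n + 1))
  have hne : (⨆ n, e n) ≠ 0 := by
    intro h0
    have := hlt' 0
    rw [h0] at this
    exact zero_le.not_gt this
  refine ⟨hE.2.2 _ hsup_lt hne ?_, hsup_lt⟩
  intro β hβ
  have hex : ∃ n, β < e n := by
    by_contra hcon
    push_neg at hcon
    exact absurd (Ordinal.iSup_le hcon) (not_le.2 hβ)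
  obtain ⟨n, hn⟩ := hex
  obtain ⟨z, hzE, hz1, hz2⟩ := hmem n
  exact ⟨z, hzE, lt_of_lt_of_le hn hz1, lt_of_le_of_lt hz2 (hlt' (n + 1))⟩

def obsup (o : Ordinal.{u}) (f : ∀ a < o, Ordinal.{u}) : Ordinal.{u} :=
  Ordinal.bsup.{u, u} o f

lemma obsup_lt_omega1 {o : Ordinal.{u}} {f : ∀ a < o, Ordinal.{u}}
    (ho : o < omega_1) (hf : ∀ i hi, f i hi < omega_1) : obsup o f < omega_1 :=
  Cardinal.bsup_lt_ord_of_isRegular Cardinal.isRegular_aleph_one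
    (Cardinal.lt_ord.1 ho) hf

lemma le_obsup {o : Ordinal.{u}} (f : ∀ a < o, Ordinal.{u}) (i : Ordinal.{u})
    (hi : i < o) : f i hi ≤ obsup o f :=
  Ordinal.le_bsup f i hi

def GoodLvl {A : Type*} [PartialOrder A] (trA : TreeHt A)
    (C D : Set Ordinal) (δ : Ordinal) (g : A → A) (γ : Ordinal) : Prop :=
  γ ∈ C ∧ γ ∈ D ∧ δ < γ ∧ ∀ t : A, trA.ht t = γ → γ ≤ trA.ht (g t)

end AuxLemmas

/-- If `R` is a full Suslin tree and `A` is a club-minimal Aronszajn tree, then for no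
`s ∈ R` and no club `D` is there a level-preserving order-preserving injection of
`R_s↾D` into `A`. -/
theorem statement1 (R A : Type*) [PartialOrder R] [PartialOrder A]
    (trR : TreeHt R) (trA : TreeHt A)
    (hR : IsFullSuslin trR) (hA : IsAronszajn trA) (hmin : ClubMinimal trA) :
    ¬ ∃ (s : R) (D : Set Ordinal) (f : R → A), IsClubOmega1 D ∧
      (∀ t₁ t₂ : R, s ≤ t₁ → s ≤ t₂ → trR.ht t₁ ∈ D → trR.ht t₂ ∈ D →
        t₁ < t₂ → f t₁ < f t₂) ∧
      (∀ t₁ t₂ : R, s ≤ t₁ → s ≤ t₂ → trR.ht t₁ ∈ D → trR.ht t₂ ∈ D →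
        f t₁ = f t₂ → t₁ = t₂) ∧
      (∀ t : R, s ≤ t → trR.ht t ∈ D → trA.ht (f t) = trR.ht t) := by
  rintro ⟨s, D, f, hD, hf1, hf2, hf3⟩
  classical
  obtain ⟨⟨⟨⟨hRht, hRlev, hRcnt⟩, hRch⟩, hRanti⟩, hRfull⟩ := hR
  obtain ⟨⟨hAht, hAlev, hAcnt⟩, hAch⟩ := hA
  -- R is pruned: every node extends to every countable height
  have hprune : ∀ t : R, ∀ β, trR.ht t ≤ β → β < omega_1 →
      ∃ t', t ≤ t' ∧ trR.ht t' = β := by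
    intro t β htβ hβ
    obtain ⟨dtr, hdht, hdsus⟩ := hRfull 0 (trR.ht t) (hRht t) ![t]
      (fun i j _ => Fin.ext (by omega))
      (by intro i; fin_cases i; simp)
    have hsub : β - trR.ht t < omega_1 :=
      lt_of_le_of_lt (Ordinal.sub_le.2 (le_add_self (a := β))) hβ
    obtain ⟨F, hF⟩ := hdsus.1.1.2.1 (β - trR.ht t) hsub
    have h0 : t ≤ F.1 0 := by simpa using F.2.1 0
    have h2 : trR.ht t ≤ trR.ht (F.1 0) := trR.ht_le_of_le h0
    have h1 : trR.ht (F.1 0) - trR.ht t = β - trR.ht t := by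
      rw [← hdht F]; exact hF
    refine ⟨F.1 0, h0, ?_⟩
    calc trR.ht (F.1 0) = trR.ht t + (trR.ht (F.1 0) - trR.ht t) :=
          (Ordinal.add_sub_cancel_of_le h2).symm
      _ = trR.ht t + (β - trR.ht t) := by rw [h1]
      _ = β := Ordinal.add_sub_cancel_of_le htβ
  -- above every node of R there are two incomparable nodes
  have hsplit : ∀ x : R, ∃ y₁ y₂ : R, x ≤ y₁ ∧ x ≤ y₂ ∧ ¬ (y₁ ≤ y₂) ∧ ¬ (y₂ ≤ y₁) := by
    intro x
    by_contra hcon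
    push_neg at hcon
    have hchain : IsChain (· ≤ ·) {z : R | x ≤ z} := by
      intro a ha b hb hab
      by_cases hab' : a ≤ b
      · exact Or.inl hab'
      · exact Or.inr (hcon a b ha hb hab')
    have hcnt := hRch _ hchain
    have hpick : ∀ o : (Set.Iio (omega_1 : Ordinal)),
        ∃ z : R, x ≤ z ∧ trR.ht z = trR.ht x + o.1 := by
      rintro ⟨o, ho⟩
      exact hprune x _ le_self_add (add_lt_omega1 (hRht x) ho)
    choose ι hι1 hι2 using hpick
    refine not_countable_of_inj _ ι (fun o => hι1 o) ?_ hcnt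
    intro o₁ o₂ hoe
    have h12 := hι2 o₁
    rw [hoe, hι2 o₂] at h12
    exact Subtype.ext (add_left_cancel h12.symm)
  -- two incomparable nodes s₁ s₀ above s at a common level δ ∈ D
  obtain ⟨x0, y0, hsx0, hsy0, hxy1, hxy2⟩ := hsplit s
  obtain ⟨δ0, hδ0D, hδ0ge⟩ := hD.2.1 (max (trR.ht x0) (trR.ht y0))
    (max_lt (hRht x0) (hRht y0))
  have hδlt : δ0 < omega_1 := hD.1 δ0 hδ0D
  obtain ⟨s₁, hx0s₁, hts₁⟩ := hprune x0 δ0 ((le_max_left _ _).trans hδ0ge) hδlt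
  obtain ⟨s₀, hy0s₀, hts₀⟩ := hprune y0 δ0 ((le_max_right _ _).trans hδ0ge) hδlt
  set δ := δ0 with hδdef
  have hss₁ : s ≤ s₁ := hsx0.trans hx0s₁
  have hss₀ : s ≤ s₀ := hsy0.trans hy0s₀
  have hinc : ¬ (s₀ ≤ s₁) ∧ ¬ (s₁ ≤ s₀) := by
    constructor
    · intro hle
      rcases trR.comparable_of_le_le hx0s₁ (hy0s₀.trans hle) with h | h
      · exact hxy1 h
      · exact hxy2 h
    · intro hle
      rcases trR.comparable_of_le_le (hx0s₁.trans hle) hy0s₀ with h | h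
      · exact hxy1 h
      · exact hxy2 h
  have hne10 : s₁ ≠ s₀ := fun h => hinc.2 h.le
  -- the subtree A₀ of A generated by the image of the cone above s₀
  set A₀ : Set A := {a : A | ∃ r : R, s₀ ≤ r ∧ trR.ht r ∈ D ∧ a ≤ f r} with hA₀def
  have hA₀sub : IsSubtree trA A₀ := by
    constructor
    · rintro a ⟨r, hr1, hr2, hr3⟩ b hba
      exact ⟨r, hr1, hr2, hba.trans hr3⟩
    · rintro a ⟨r, hr1, hr2, hr3⟩ β hβ1 hβ2
      obtain ⟨γ', hγ'D, hγ'ge⟩ := hD.2.1 (max β (trR.ht r)) (max_lt hβ2 (hRht r))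
      have hγ'lt : γ' < omega_1 := hD.1 γ' hγ'D
      obtain ⟨r', hrr', htr'⟩ := hprune r γ' ((le_max_right _ _).trans hγ'ge) hγ'lt
      have hr'D : trR.ht r' ∈ D := by rw [htr']; exact hγ'D
      have hsr : s ≤ r := hss₀.trans hr1
      have hsr' : s ≤ r' := hsr.trans hrr'
      have hfle : f r ≤ f r' := by
        rcases eq_or_lt_of_le hrr' with h | hlt
        · rw [h]
        · exact (hf1 r r' hsr hsr' hr2 hr'D hlt).le
      have hfr' : trA.ht (f r') = γ' := by rw [hf3 r' hsr' hr'D, htr']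
      have hβγ' : β ≤ γ' := (le_max_left _ _).trans hγ'ge
      obtain ⟨b, hbfr', htb⟩ := trA.exists_le_ht (f r') (ξ := β) (by rw [hfr']; exact hβγ')
      refine ⟨b, ⟨r', hr1.trans hrr', hr'D, hbfr'⟩, ?_, htb⟩
      exact trA.le_of_le_le_ht_le (hr3.trans hfle) hbfr' (by rw [htb]; exact hβ1)
  obtain ⟨C, hC, g, hgA₀, hg1, hg2⟩ := hmin A₀ hA₀sub
  -- elements of A₀ at D-levels ≥ δ are f-images of the cone above s₀
  have himg : ∀ a ∈ A₀, trA.ht a ∈ D → δ ≤ trA.ht a →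
      ∃ p : R, s₀ ≤ p ∧ trR.ht p = trA.ht a ∧ f p = a := by
    rintro a ⟨r, hr1, hr2, hr3⟩ haD hδa
    have hsr : s ≤ r := hss₀.trans hr1
    have hfr : trA.ht (f r) = trR.ht r := hf3 r hsr hr2
    have hle : trA.ht a ≤ trR.ht r := by rw [← hfr]; exact trA.ht_le_of_le hr3
    obtain ⟨p, hpr, htp⟩ := trR.exists_le_ht r hle
    have hs₀p : s₀ ≤ p := trR.le_of_le_le_ht_le hr1 hpr (by rw [htp, hts₀]; exact hδa)
    have hpD : trR.ht p ∈ D := by rw [htp]; exact haD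
    have hsp : s ≤ p := hss₀.trans hs₀p
    have hfp : f p ≤ f r := by
      rcases eq_or_lt_of_le hpr with h | h
      · rw [h]
      · exact (hf1 p r hsp hsr hpD hr2 h).le
    have hfpa : trA.ht (f p) = trA.ht a := by rw [hf3 p hsp hpD, htp]
    exact ⟨p, hs₀p, by rw [htp], trA.eq_of_le_le_ht_eq hfp hr3 hfpa⟩
  -- the level-projected transfer map h
  have hhfun : ∀ r : R, ∃ p : R, s₁ ≤ r → GoodLvl trA C D δ g (trR.ht r) →
      s₀ ≤ p ∧ trR.ht p = trR.ht r ∧ f p ≤ g (f r) := by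
    intro r
    by_cases hcase : s₁ ≤ r ∧ GoodLvl trA C D δ g (trR.ht r)
    · obtain ⟨h1, h2C, h2D, h2δ, h2g⟩ := And.intro hcase.1 hcase.2
      have hsr : s ≤ r := hss₁.trans h1
      have hfrA : trA.ht (f r) = trR.ht r := hf3 r hsr h2D
      have hgf : g (f r) ∈ A₀ := hgA₀ (f r) (by rw [hfrA]; exact h2C)
      have hght : trR.ht r ≤ trA.ht (g (f r)) := h2g (f r) hfrA
      obtain ⟨a, hag, hta⟩ := trA.exists_le_ht (g (f r)) hght
      have haA₀ : a ∈ A₀ := by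
        obtain ⟨w, hw1, hw2, hw3⟩ := hgf
        exact ⟨w, hw1, hw2, hag.trans hw3⟩
      obtain ⟨p, hp1, hp2, hp3⟩ := himg a haA₀ (by rw [hta]; exact h2D)
        (by rw [hta]; exact h2δ.le)
      exact ⟨p, fun _ _ => ⟨hp1, by rw [hp2, hta], by rw [hp3]; exact hag⟩⟩
    · exact ⟨s₀, fun h1 h2 => absurd ⟨h1, h2⟩ hcase⟩
  choose h hh using hhfun
  have hhspec : ∀ r : R, s₁ ≤ r → GoodLvl trA C D δ g (trR.ht r) →
      s₀ ≤ h r ∧ trR.ht (h r) = trR.ht r ∧ f (h r) ≤ g (f r) := fun r h1 h2 => hh r h1 h2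
  -- pick functions for the clubs C and D
  have hCpick : ∀ y : Ordinal, ∃ z, y < omega_1 → (z ∈ C ∧ y < z ∧ z < omega_1) := by
    intro y
    by_cases hy : y < omega_1
    · obtain ⟨β, hβC, hβge⟩ := hC.2.1 (y + 1) (succ_lt_omega1 hy)
      exact ⟨β, fun _ => ⟨hβC, lt_of_lt_of_le (lt_add_one_ordinal y) hβge, hC.1 β hβC⟩⟩
    · exact ⟨0, fun hy' => absurd hy' hy⟩
  choose pc hpc using hCpick
  have hDpick : ∀ y : Ordinal, ∃ z, y < omega_1 → (z ∈ D ∧ y < z ∧ z < omega_1) := by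
    intro y
    by_cases hy : y < omega_1
    · obtain ⟨β, hβD, hβge⟩ := hD.2.1 (y + 1) (succ_lt_omega1 hy)
      exact ⟨β, fun _ => ⟨hβD, lt_of_lt_of_le (lt_add_one_ordinal y) hβge, hD.1 β hβD⟩⟩
    · exact ⟨0, fun hy' => absurd hy' hy⟩
  choose pd hpd using hDpick
  -- C ∩ D is unbounded
  have hCDpick : ∀ y : Ordinal, y < omega_1 →
      ∃ z, z ∈ C ∧ z ∈ D ∧ y ≤ z ∧ z < omega_1 := by
    intro y hy
    obtain ⟨e, he0, hestep⟩ : ∃ e : ℕ → Ordinal, e 0 = pc y ∧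
        ∀ n, e (n + 1) = pc (pd (e n)) :=
      ⟨fun n => Nat.rec (pc y) (fun _ prev => pc (pd prev)) n, rfl, fun n => rfl⟩
    have hrec : ∀ n, e n < omega_1 ∧ e n ∈ C ∧ e n < e (n + 1) ∧
        pd (e n) ∈ D ∧ e n < pd (e n) ∧ pd (e n) ≤ e (n + 1) := by
      intro n
      induction n with
      | zero =>
        obtain ⟨hc1, hc2, hc3⟩ := hpc y hy
        have h0lt : e 0 < omega_1 := by rw [he0]; exact hc3
        obtain ⟨hd1, hd2, hd3⟩ := hpd (e 0) h0lt
        obtain ⟨hc1', hc2', hc3'⟩ := hpc (pd (e 0)) hd3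
        refine ⟨h0lt, by rw [he0]; exact hc1, ?_, hd1, hd2, ?_⟩
        · rw [hestep 0]; exact lt_trans hd2 hc2'
        · rw [hestep 0]; exact hc2'.le
      | succ m ih =>
        obtain ⟨hm1, hm2, hm3, hm4, hm5, hm6⟩ := ih
        obtain ⟨hd1, hd2, hd3⟩ := hpd (e m) hm1
        obtain ⟨hc1', hc2', hc3'⟩ := hpc (pd (e m)) hd3
        have hs1 : e (m + 1) < omega_1 := by rw [hestep m]; exact hc3'
        have hs2 : e (m + 1) ∈ C := by rw [hestep m]; exact hc1'
        obtain ⟨hd1', hd2', hd3'⟩ := hpd (e (m + 1)) hs1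
        obtain ⟨hc1'', hc2'', hc3''⟩ := hpc (pd (e (m + 1))) hd3'
        refine ⟨hs1, hs2, ?_, hd1', hd2', ?_⟩
        · rw [hestep (m + 1)]; exact lt_trans hd2' hc2''
        · rw [hestep (m + 1)]; exact hc2''.le
    have hCsup := club_sup_mem hC e (fun n => (hrec n).1) (fun n => (hrec n).2.2.1)
      (fun n => ⟨e n, (hrec n).2.1, le_rfl, (hrec n).2.2.1.le⟩)
    have hDsup := club_sup_mem hD e (fun n => (hrec n).1) (fun n => (hrec n).2.2.1)
      (fun n => ⟨pd (e n), (hrec n).2.2.2.1, (hrec n).2.2.2.2.1.le, (hrec n).2.2.2.2.2⟩)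
    refine ⟨⨆ n, e n, hCsup.1, hDsup.1, ?_, hCsup.2⟩
    have : y ≤ e 0 := by rw [he0]; exact (hpc y hy).2.1.le
    exact this.trans (Ordinal.le_iSup e 0)
  -- counting: above a bound, g does not drop heights below a prescribed level
  have hBB : ∀ l : Ordinal, l < omega_1 → ∃ B : Ordinal, B < omega_1 ∧
      ∀ t : A, trA.ht t ∈ C → B ≤ trA.ht t → l ≤ trA.ht (g t) := by
    intro l hl
    set Z : Set A := {t : A | trA.ht t ∈ C ∧ trA.ht (g t) < l} with hZdef
    have hZc : Z.Countable := by
      have hY : (⋃ ξ ∈ Set.Iio l, trA.level ξ).Countable :=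
        Set.Countable.biUnion (countable_Iio_of_lt_omega1 hl) (fun ξ _ => hAcnt ξ)
      have hmemY : ∀ z : Z, g z.1 ∈ (⋃ ξ ∈ Set.Iio l, trA.level ξ) := fun z =>
        Set.mem_biUnion (z.2.2 : trA.ht (g z.1) < l) rfl
      rw [← Set.countable_coe_iff]
      haveI : Countable (⋃ ξ ∈ Set.Iio l, trA.level ξ : Set A) := hY.to_subtype
      exact Function.Injective.countable
        (f := fun z : Z => (⟨g z.1, hmemY z⟩ : (⋃ ξ ∈ Set.Iio l, trA.level ξ : Set A)))
        (fun z₁ z₂ hz => Subtype.ext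
          (hg2 z₁.1 z₂.1 z₁.2.1 z₂.2.1 (congrArg Subtype.val hz)))
    rcases Set.eq_empty_or_nonempty Z with hZe | hZne
    · refine ⟨0, lt_of_le_of_lt (zero_le (a := δ)) hδlt, ?_⟩
      intro t htC _
      by_contra hcon
      push_neg at hcon
      have : t ∈ Z := ⟨htC, hcon⟩
      rw [hZe] at this
      exact this
    · haveI := hZc.to_subtype
      haveI : Nonempty Z := hZne.to_subtype
      obtain ⟨σ, hσ⟩ := (countable_iff_exists_surjective (α := ↥Z)).1 inferInstance
      refine ⟨⨆ n, trA.ht (σ n).1 + 1, sup_lt_omega1 (fun n => succ_lt_omega1 (hAht _)), ?_⟩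
      intro t htC hB
      by_contra hcon
      push_neg at hcon
      obtain ⟨n, hn⟩ := hσ ⟨t, htC, hcon⟩
      have h1 : trA.ht t + 1 ≤ ⨆ n, trA.ht (σ n).1 + 1 := by
        have := Ordinal.le_iSup (fun n => trA.ht (σ n).1 + 1) n
        rwa [hn] at this
      exact absurd (lt_of_lt_of_le (lt_add_one_ordinal (trA.ht t)) (h1.trans hB)) (lt_irrefl _)
  -- good levels are unbounded
  have hstepq : ∀ y : Ordinal, ∃ z, y < omega_1 → (z ∈ C ∧ z ∈ D ∧ y < z ∧ z < omega_1 ∧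
      ∀ t : A, trA.ht t ∈ C → z ≤ trA.ht t → y ≤ trA.ht (g t)) := by
    intro y
    by_cases hy : y < omega_1
    · obtain ⟨B, hB1, hB2⟩ := hBB y hy
      obtain ⟨z, hz1, hz2, hz3, hz4⟩ := hCDpick (max (y + 1) B)
        (max_lt (succ_lt_omega1 hy) hB1)
      refine ⟨z, fun _ => ⟨hz1, hz2,
        lt_of_lt_of_le (lt_add_one_ordinal y) ((le_max_left _ _).trans hz3), hz4, ?_⟩⟩
      intro t htC hzt
      exact hB2 t htC (((le_max_right _ _).trans hz3).trans hzt)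
    · exact ⟨0, fun hy' => absurd hy' hy⟩
  choose q hq using hstepq
  have hGoodU : ∀ l : Ordinal, l < omega_1 →
      ∃ γ, GoodLvl trA C D δ g γ ∧ l ≤ γ ∧ γ < omega_1 := by
    intro l hl
    have hbase : max l (δ + 1) < omega_1 := max_lt hl (succ_lt_omega1 hδlt)
    obtain ⟨e, he0, hestep⟩ : ∃ e : ℕ → Ordinal, e 0 = q (max l (δ + 1)) ∧
        ∀ n, e (n + 1) = q (e n) :=
      ⟨fun n => Nat.rec (q (max l (δ + 1))) (fun _ prev => q prev) n, rfl, fun n => rfl⟩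
    have hrec : ∀ n, e n < omega_1 ∧ e n ∈ C ∧ e n ∈ D ∧ e n < e (n + 1) := by
      intro n
      induction n with
      | zero =>
        obtain ⟨h1, h2, h3, h4, h5⟩ := hq _ hbase
        have h0lt : e 0 < omega_1 := by rw [he0]; exact h4
        obtain ⟨h1', h2', h3', h4', h5'⟩ := hq (e 0) h0lt
        exact ⟨h0lt, by rw [he0]; exact h1, by rw [he0]; exact h2,
          by rw [hestep 0]; exact h3'⟩
      | succ m ih =>
        obtain ⟨hm1, hm2, hm3, hm4⟩ := ih
        obtain ⟨h1', h2', h3', h4', h5'⟩ := hq (e m) hm1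
        have hs1 : e (m + 1) < omega_1 := by rw [hestep m]; exact h4'
        have hs2 : e (m + 1) ∈ C := by rw [hestep m]; exact h1'
        have hs3 : e (m + 1) ∈ D := by rw [hestep m]; exact h2'
        obtain ⟨h1'', h2'', h3'', h4'', h5''⟩ := hq (e (m + 1)) hs1
        exact ⟨hs1, hs2, hs3, by rw [hestep (m + 1)]; exact h3''⟩
    have hCsup := club_sup_mem hC e (fun n => (hrec n).1) (fun n => (hrec n).2.2.2)
      (fun n => ⟨e n, (hrec n).2.1, le_rfl, (hrec n).2.2.2.le⟩)
    have hDsup := club_sup_mem hD e (fun n => (hrec n).1) (fun n => (hrec n).2.2.2)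
      (fun n => ⟨e n, (hrec n).2.2.1, le_rfl, (hrec n).2.2.2.le⟩)
    have he0lt : max l (δ + 1) < e 0 := by rw [he0]; exact (hq _ hbase).2.2.1
    have he0le : e 0 ≤ ⨆ n, e n := Ordinal.le_iSup e 0
    refine ⟨⨆ n, e n, ⟨hCsup.1, hDsup.1, ?_, ?_⟩, ?_, hCsup.2⟩
    · exact lt_of_lt_of_le (lt_of_lt_of_le (lt_add_one_ordinal δ)
        (((le_max_right l (δ+1)).trans he0lt.le))) he0le
    · intro t hteq
      have htC : trA.ht t ∈ C := by rw [hteq]; exact hCsup.1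
      refine Ordinal.iSup_le ?_
      intro n
      have hq' := hq (e n) (hrec n).1
      refine hq'.2.2.2.2 t htC ?_
      rw [hteq, ← hestep n]
      exact Ordinal.le_iSup e (n + 1)
    · exact le_trans ((le_max_left _ _).trans he0lt.le) he0le
  -- h is order preserving across good levels
  have hmapmono : ∀ r₁ r₂ : R, s₁ ≤ r₁ → s₁ ≤ r₂ →
      GoodLvl trA C D δ g (trR.ht r₁) → GoodLvl trA C D δ g (trR.ht r₂) →
      r₁ < r₂ → h r₁ < h r₂ := by
    intro r₁ r₂ h₁ h₂ hG₁ hG₂ hlt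
    obtain ⟨hp₁s, hp₁h, hp₁f⟩ := hhspec r₁ h₁ hG₁
    obtain ⟨hp₂s, hp₂h, hp₂f⟩ := hhspec r₂ h₂ hG₂
    have hsr₁ : s ≤ r₁ := hss₁.trans h₁
    have hsr₂ : s ≤ r₂ := hss₁.trans h₂
    have hht : trR.ht r₁ < trR.ht r₂ := trR.ht_lt hlt
    have hfr : f r₁ < f r₂ := hf1 _ _ hsr₁ hsr₂ hG₁.2.1 hG₂.2.1 hlt
    have hfC₁ : trA.ht (f r₁) ∈ C := by rw [hf3 r₁ hsr₁ hG₁.2.1]; exact hG₁.1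
    have hfC₂ : trA.ht (f r₂) ∈ C := by rw [hf3 r₂ hsr₂ hG₂.2.1]; exact hG₂.1
    have hgf : g (f r₁) < g (f r₂) := hg1 _ _ hfC₁ hfC₂ hfr
    have hhD₁ : trR.ht (h r₁) ∈ D := by rw [hp₁h]; exact hG₁.2.1
    have hhD₂ : trR.ht (h r₂) ∈ D := by rw [hp₂h]; exact hG₂.2.1
    have hsh₁ : s ≤ h r₁ := hss₀.trans hp₁s
    have hsh₂ : s ≤ h r₂ := hss₀.trans hp₂s
    have hfh₁ : trA.ht (f (h r₁)) = trR.ht r₁ := by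
      rw [hf3 (h r₁) hsh₁ hhD₁, hp₁h]
    have hfh₂ : trA.ht (f (h r₂)) = trR.ht r₂ := by
      rw [hf3 (h r₂) hsh₂ hhD₂, hp₂h]
    have hff : f (h r₁) ≤ f (h r₂) :=
      trA.le_of_le_le_ht_le (hp₁f.trans hgf.le) hp₂f
        (by rw [hfh₁, hfh₂]; exact hht.le)
    obtain ⟨p, hp, htp⟩ := trR.exists_le_ht (h r₂) (ξ := trR.ht r₁)
      (by rw [hp₂h]; exact hht.le)
    have hs₀p : s₀ ≤ p := trR.le_of_le_le_ht_le hp₂s hp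
      (by rw [htp, hts₀]; exact hG₁.2.2.1.le)
    have hpD : trR.ht p ∈ D := by rw [htp]; exact hG₁.2.1
    have hsp : s ≤ p := hss₀.trans hs₀p
    have hfp : f p ≤ f (h r₂) := by
      rcases eq_or_lt_of_le hp with h' | h'
      · rw [h']
      · exact (hf1 p (h r₂) hsp hsh₂ hpD hhD₂ h').le
    have hfeq : f p = f (h r₁) := trA.eq_of_le_le_ht_eq hfp hff
      (by rw [hf3 p hsp hpD, htp, hfh₁])
    have hpe : p = h r₁ := hf2 p (h r₁) hsp hsh₁ hpD
      (by rw [hp₁h]; exact hG₁.2.1) hfeq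
    have hle' : h r₁ ≤ h r₂ := hpe ▸ hp
    exact trR.lt_of_le_of_ht_lt hle' (by rw [hp₁h, hp₂h]; exact hht)
  -- the recursion step: a new pair dominating all previous levels
  have hexnext : ∀ (β : Ordinal), β < omega_1 → ∀ prev : Ordinal → R × R,
      ∃ p : R × R,
        trR.ht p.1 = trR.ht p.2 ∧ GoodLvl trA C D δ g (trR.ht p.1) ∧
        s₁ ≤ p.1 ∧ s₀ ≤ p.2 ∧ p.2 ≠ h p.1 ∧
        ∃ x : R, s₁ ≤ x ∧ x ≤ p.1 ∧ GoodLvl trA C D δ g (trR.ht x) ∧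
          (∀ α, α < β → trR.ht ((prev α).1) < trR.ht x) ∧ h x ≤ p.2 ∧
          trR.ht x < trR.ht p.1 := by
    intro β hβ prev
    have hlam_lt : obsup β (fun α _ => trR.ht ((prev α).1) + 1) < omega_1 :=
      obsup_lt_omega1 hβ (fun i hi => succ_lt_omega1 (hRht _))
    obtain ⟨μ, hμgood, hμge, hμlt⟩ :=
      hGoodU (obsup β (fun α _ => trR.ht ((prev α).1) + 1)) hlam_lt
    obtain ⟨x, hs₁x, htx⟩ := hprune s₁ μ (by rw [hts₁]; exact hμgood.2.2.1.le) hμlt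
    have hGx : GoodLvl trA C D δ g (trR.ht x) := by rw [htx]; exact hμgood
    obtain ⟨hyS, hyH, hyF⟩ := hhspec x hs₁x hGx
    obtain ⟨y₁, y₂, hy₁, hy₂, hyc₁, hyc₂⟩ := hsplit (h x)
    obtain ⟨γ, hγgood, hγge, hγlt⟩ := hGoodU
      (max (max (trR.ht y₁) (trR.ht y₂)) (trR.ht x) + 1)
      (succ_lt_omega1 (max_lt (max_lt (hRht _) (hRht _)) (hRht x)))
    have hmax : max (max (trR.ht y₁) (trR.ht y₂)) (trR.ht x) < γ :=
      lt_of_lt_of_le (lt_add_one_ordinal _) hγge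
    obtain ⟨z₁, hy₁z₁, htz₁⟩ := hprune y₁ γ
      (((le_max_left _ _).trans (le_max_left _ _)).trans hmax.le) hγlt
    obtain ⟨z₂, hy₂z₂, htz₂⟩ := hprune y₂ γ
      (((le_max_right _ _).trans (le_max_left _ _)).trans hmax.le) hγlt
    obtain ⟨r, hxr, htr⟩ := hprune x γ ((le_max_right _ _).trans hmax.le) hγlt
    have hz₁₂ : z₁ ≠ z₂ := by
      intro hzz
      have hcc : y₁ ≤ y₂ ∨ y₂ ≤ y₁ :=
        trR.comparable_of_le_le hy₁z₁ (hzz ▸ hy₂z₂)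
      rcases hcc with h' | h'
      · exact hyc₁ h'
      · exact hyc₂ h'
    refine ⟨(r, if z₁ = h r then z₂ else z₁), ?_, ?_, hs₁x.trans hxr, ?_, ?_,
      x, hs₁x, hxr, hGx, ?_, ?_, ?_⟩
    · by_cases hcc : z₁ = h r <;> simp only [hcc, if_pos, if_true, if_neg, if_false] <;>
        rw [htr] <;> first | rw [htz₂] | rw [htz₁]
    · rw [htr]; exact hγgood
    · by_cases hcc : z₁ = h r
      · simp only [hcc, if_true]
        exact hyS.trans (hy₂.trans hy₂z₂)
      · simp only [if_neg hcc]
        exact hyS.trans (hy₁.trans hy₁z₁)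
    · by_cases hcc : z₁ = h r
      · simp only [hcc, if_true]
        intro hzz
        exact hz₁₂ (hcc.trans hzz.symm)
      · simp only [if_neg hcc]
        exact hcc
    · intro α hα
      have hb := le_obsup (fun α _ => trR.ht ((prev α).1) + 1) α hα
      rw [htx]
      exact lt_of_lt_of_le (lt_of_lt_of_le (lt_add_one_ordinal _) hb) hμge
    · by_cases hcc : z₁ = h r
      · simp only [hcc, if_true]
        exact hy₂.trans hy₂z₂
      · simp only [if_neg hcc]
        exact hy₁.trans hy₁z₁
    · rw [htr]
      exact lt_of_le_of_lt (le_max_right _ _) hmax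
  -- build the transfinite sequence of pairs
  obtain ⟨F, hFdef⟩ : ∃ F : ∀ β : Ordinal, (∀ α, α < β → R × R) → R × R,
      ∀ β IH, F β IH = if hβ : β < omega_1 then
        Classical.choose (hexnext β hβ (fun α => if hα : α < β then IH α hα else (s₁, s₀)))
        else (s₁, s₀) :=
    ⟨fun β IH => if hβ : β < omega_1 then
        Classical.choose (hexnext β hβ (fun α => if hα : α < β then IH α hα else (s₁, s₀)))
        else (s₁, s₀), fun _ _ => rfl⟩
  obtain ⟨seq, hseqdef⟩ : ∃ seq : Ordinal → R × R,
      ∀ β, seq β = F β (fun α _ => seq α) :=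
    ⟨WellFounded.fix Ordinal.lt_wf F, fun β => WellFounded.fix_eq _ _ _⟩
  have hseqeq : ∀ β (hβ : β < omega_1), seq β =
      Classical.choose (hexnext β hβ (fun α => if hα : α < β then seq α else (s₁, s₀))) := by
    intro β hβ
    rw [hseqdef β, hFdef, dif_pos hβ]
  have hseq : ∀ β, β < omega_1 →
      trR.ht (seq β).1 = trR.ht (seq β).2 ∧
      GoodLvl trA C D δ g (trR.ht (seq β).1) ∧
      s₁ ≤ (seq β).1 ∧ s₀ ≤ (seq β).2 ∧ (seq β).2 ≠ h ((seq β).1) ∧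
      ∃ x : R, s₁ ≤ x ∧ x ≤ (seq β).1 ∧ GoodLvl trA C D δ g (trR.ht x) ∧
        (∀ α, α < β → trR.ht ((seq α).1) < trR.ht x) ∧ h x ≤ (seq β).2 ∧
        trR.ht x < trR.ht (seq β).1 := by
    intro β hβ
    have hsp := Classical.choose_spec
      (hexnext β hβ (fun α => if hα : α < β then seq α else (s₁, s₀)))
    rw [← hseqeq β hβ] at hsp
    obtain ⟨h1, h2, h3, h4, h5, x, hx1, hx2, hx3, hx4, hx5, hx6⟩ := hsp
    refine ⟨h1, h2, h3, h4, h5, x, hx1, hx2, hx3, ?_, hx5, hx6⟩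
    intro α hα
    have := hx4 α hα
    simpa only [dif_pos hα] using this
  -- heights strictly increase along the sequence
  have hγmono : ∀ α β, α < β → β < omega_1 →
      trR.ht ((seq α).1) < trR.ht ((seq β).1) := by
    intro α β hαβ hβ
    obtain ⟨-, -, -, -, -, x, -, -, -, hx4, -, hx6⟩ := hseq β hβ
    exact lt_trans (hx4 α hαβ) hx6
  -- pairwise incomparability (forward direction)
  have hpairinc : ∀ α β, α < omega_1 → β < omega_1 → α < β →
      ¬ ((seq α).1 ≤ (seq β).1 ∧ (seq α).2 ≤ (seq β).2) := by
    rintro α β hα hβ hαβ ⟨hr, hu⟩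
    obtain ⟨hEα, hGα, hs₁α, hs₀α, hneα, -⟩ := hseq α hα
    obtain ⟨hEβ, hGβ, hs₁β, hs₀β, hneβ, x, hx1, hx2, hx3, hx4, hx5, hx6⟩ := hseq β hβ
    have hhtαx : trR.ht ((seq α).1) < trR.ht x := hx4 α hαβ
    have hrx : (seq α).1 ≤ x := trR.le_of_le_le_ht_le hr hx2 hhtαx.le
    have hrx' : (seq α).1 < x := trR.lt_of_le_of_ht_lt hrx hhtαx
    have hhh : h ((seq α).1) < h x := hmapmono _ x hs₁α hx1 hGα hx3 hrx'
    obtain ⟨-, hhtx, -⟩ := hhspec x hx1 hx3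
    obtain ⟨-, hhtα, -⟩ := hhspec _ hs₁α hGα
    have huhx : (seq α).2 ≤ h x := trR.le_of_le_le_ht_le hu hx5
      (by rw [← hEα, hhtx]; exact hhtαx.le)
    have heq : (seq α).2 = h ((seq α).1) :=
      trR.eq_of_le_le_ht_eq huhx hhh.le (by rw [← hEα, hhtα])
    exact hneα heq
  -- assemble the uncountable antichain in the derived tree R_{s₁} ⊗ R_{s₀}
  have hδD : δ ∈ D := hδ0D
  obtain ⟨dtr, hdht, hdsus⟩ := hRfull 1 δ hδlt ![s₁, s₀]
    (by
      intro i j hij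
      fin_cases i <;> fin_cases j
      · rfl
      · exact absurd (by simpa using hij) hne10
      · exact absurd ((by simpa using hij : s₀ = s₁)).symm hne10
      · rfl)
    (by intro i; fin_cases i <;> simpa using by first | exact hts₁ | exact hts₀)
  have hmem : ∀ β, β < omega_1 →
      (![(seq β).1, (seq β).2] : Fin 2 → R) ∈ derivedTreeSet trR ![s₁, s₀] := by
    intro β hβ
    obtain ⟨hE, hG, h1, h0, -⟩ := hseq β hβ
    refine ⟨?_, trR.ht ((seq β).1), ?_⟩
    · intro i
      fin_cases i
      · simpa using h1
      · simpa using h0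
    · intro i
      fin_cases i
      · simp
      · simpa using hE.symm
  have keyle : ∀ oa ob : Ordinal, oa < omega_1 → ob < omega_1 → oa < ob →
      ¬ ((![(seq oa).1, (seq oa).2] : Fin 2 → R) ≤ ![(seq ob).1, (seq ob).2]) ∧
      ¬ ((![(seq ob).1, (seq ob).2] : Fin 2 → R) ≤ ![(seq oa).1, (seq oa).2]) := by
    intro oa ob ha hb hab
    constructor
    · intro hle
      have h0 : (seq oa).1 ≤ (seq ob).1 := by simpa using (Pi.le_def.1 hle) 0
      have h1 : (seq oa).2 ≤ (seq ob).2 := by simpa using (Pi.le_def.1 hle) 1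
      exact hpairinc oa ob ha hb hab ⟨h0, h1⟩
    · intro hle
      have h0 : (seq ob).1 ≤ (seq oa).1 := by simpa using (Pi.le_def.1 hle) 0
      exact absurd (trR.ht_le_of_le h0) (not_le.2 (hγmono oa ob hab hb))
  have hanti := hdsus.2
    (Set.range (fun o : (Set.Iio (omega_1 : Ordinal)) =>
      (⟨![(seq o.1).1, (seq o.1).2], hmem o.1 o.2⟩ : ↥(derivedTreeSet trR ![s₁, s₀]))))
    (by
      rintro w₁ ⟨o₁, rfl⟩ w₂ ⟨o₂, rfl⟩ hne'
      rcases lt_trichotomy o₁.1 o₂.1 with hlt | heq | hlt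
      · have hk := keyle o₁.1 o₂.1 o₁.2 o₂.2 hlt
        exact ⟨fun hle => hk.1 (Subtype.mk_le_mk.1 hle), fun hle => hk.2 (Subtype.mk_le_mk.1 hle)⟩
      · have ho : o₁ = o₂ := Subtype.ext heq
        rw [ho] at hne'
        exact absurd rfl hne'
      · have hk := keyle o₂.1 o₁.1 o₂.2 o₁.2 hlt
        exact ⟨fun hle => hk.2 (Subtype.mk_le_mk.1 hle), fun hle => hk.1 (Subtype.mk_le_mk.1 hle)⟩)
  refine not_countable_of_inj _
    (fun o : (Set.Iio (omega_1 : Ordinal)) =>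
      (⟨![(seq o.1).1, (seq o.1).2], hmem o.1 o.2⟩ : ↥(derivedTreeSet trR ![s₁, s₀])))
    (fun o => Set.mem_range_self o) ?_ hanti
  intro o₁ o₂ hoe
  have hco : (seq o₁.1).1 = (seq o₂.1).1 := by
    have := congrArg (fun w => (w.1 : Fin 2 → R) 0) hoe
    simpa using this
  by_contra hne''
  have hne''' : o₁.1 ≠ o₂.1 := fun hq => hne'' (Subtype.ext hq)
  rcases lt_or_gt_of_ne hne''' with hlt | hlt
  · exact absurd (congrArg trR.ht hco) (ne_of_lt (hγmono o₁.1 o₂.1 hlt o₂.2))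
  · exact absurd (congrArg trR.ht hco) (ne_of_gt (hγmono o₂.1 o₁.1 hlt o₁.2))
end
end

section
/- ω and −ω are the only minimal infinite linear orders: an infinite linear order L order-embeds into every one of its infinite suborders if and only if L is order-isomorphic to ℕ or to ℕ with the reversed order. -/
section Aux

variable {L : Type*} [LinearOrder L]

/-- The set corresponding to `T : Set L` inside the order dual `Lᵒᵈ`. -/
def dualSet (T : Set L) : Set Lᵒᵈ := {x | OrderDual.ofDual x ∈ T}

/-- The set corresponding to `S : Set Lᵒᵈ` inside `L`. -/
def codualSet (S : Set Lᵒᵈ) : Set L := {a | OrderDual.toDual a ∈ S}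

lemma dualSet_infinite {T : Set L} (hT : T.Infinite) : (dualSet T).Infinite := by
  have : dualSet T = OrderDual.toDual '' T := by
    ext x
    simp [dualSet]
  rw [this]
  exact hT.image (fun a _ b _ hab => hab)

lemma codualSet_infinite {S : Set Lᵒᵈ} (hS : S.Infinite) : (codualSet S).Infinite := by
  have : codualSet S = OrderDual.ofDual '' S := by
    ext x
    simp [codualSet]
  rw [this]
  exact hS.image (fun a _ b _ hab => hab)

/-- The dual of a subtype of `L` is order-isomorphic to the corresponding subset of `Lᵒᵈ`. -/
def subDualIso (T : Set L) : (↥T)ᵒᵈ ≃o ↥(dualSet T) where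
  toFun x := ⟨OrderDual.toDual (OrderDual.ofDual x).1, (OrderDual.ofDual x).2⟩
  invFun x := OrderDual.toDual ⟨OrderDual.ofDual x.1, x.2⟩
  left_inv _ := rfl
  right_inv _ := rfl
  map_rel_iff' := by
    intro a b
    exact ⟨fun h => h, fun h => h⟩

/-- If `L ≃o ℕ` then `L` embeds into each of its infinite suborders. -/
lemma aux_back (e : L ≃o ℕ) (S : Set L) (hS : S.Infinite) : Nonempty (L ↪o ↥S) := by
  classical
  have hTinf : (e '' S).Infinite := hS.image e.injective.injOn
  haveI : Infinite (e '' S) := hTinf.to_subtype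
  have iso : ℕ ≃o ↥(e '' S) := Nat.Subtype.orderIsoOfNat (e '' S)
  have incl : ↥(e '' S) ↪o ↥S := by
    refine OrderEmbedding.ofStrictMono (fun t => ⟨e.symm t.1, ?_⟩) ?_
    · obtain ⟨t, s, hs, rfl⟩ := t
      simpa using hs
    · intro a b hab
      exact Subtype.mk_lt_mk.2 (e.symm.strictMono (Subtype.coe_lt_coe.2 hab))
  exact ⟨(e.toOrderEmbedding.trans iso.toOrderEmbedding).trans incl⟩

/-- Key: if `L` embeds into each of its infinite suborders and `ℕ` embeds into `L`,
then `L ≃o ℕ`. -/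
lemma aux_key [Infinite L] (h : ∀ S : Set L, S.Infinite → Nonempty (L ↪o ↥S))
    (f : ℕ ↪o L) : Nonempty (L ≃o ℕ) := by
  have hr : (Set.range f).Infinite := Set.infinite_range_of_injective f.injective
  obtain ⟨g⟩ := h (Set.range f) hr
  have iso1 : ℕ ≃o ↥(Set.range f) := f.strictMono.orderIso f
  have e : L ↪o ℕ := g.trans iso1.symm.toOrderEmbedding
  have hre : (Set.range e).Infinite := Set.infinite_range_of_injective e.injective
  haveI : Infinite (Set.range e) := hre.to_subtype
  exact ⟨(e.strictMono.orderIso e).trans (Nat.Subtype.orderIsoOfNat (Set.range e)).symm⟩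

end Aux

/-- `ω` and `-ω` are the only minimal infinite linear orders: an infinite linear order `L`
order-embeds into every one of its infinite suborders iff `L` is order-isomorphic to `ℕ`
or to `ℕ` with the reversed order. -/
theorem statement10 (L : Type*) [LinearOrder L] [Infinite L] :
    (∀ S : Set L, S.Infinite → Nonempty (L ↪o ↥S)) ↔
      Nonempty (L ≃o ℕ) ∨ Nonempty (L ≃o ℕᵒᵈ) := by
  haveI : Infinite Lᵒᵈ := ‹Infinite L›
  constructor
  · intro h
    by_cases hwf : WellFounded ((· < ·) : L → L → Prop)
    · -- well-founded: get an increasing sequence, conclude L ≃o ℕ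
      left
      have hpwo : (Set.univ : Set L).IsPWO := (Set.isWF_univ_iff.2 ⟨hwf⟩).isPWO
      let u : ℕ ↪ L := Infinite.natEmbedding L
      obtain ⟨φ, hφ⟩ := hpwo.exists_monotone_subseq (f := u) (fun n => Set.mem_univ _)
      have hsm : StrictMono (fun n => u (φ n)) := by
        intro m n hmn
        refine lt_of_le_of_ne ?_ (fun hEq => absurd (φ.injective (u.injective hEq)) hmn.ne)
        first
          | exact hφ m n hmn.le
          | exact hφ hmn.le
      exact aux_key h (OrderEmbedding.ofStrictMono _ hsm)
    · -- not well-founded: strictly decreasing sequence, conclude L ≃o ℕᵒᵈ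
      right
      -- transport the hypothesis to the dual order
      have hdual : ∀ S : Set Lᵒᵈ, S.Infinite → Nonempty (Lᵒᵈ ↪o ↥S) := by
        intro S hS
        obtain ⟨g⟩ := h (codualSet S) (codualSet_infinite hS)
        have emb2 : ↥(dualSet (codualSet S)) ↪o ↥S :=
          OrderEmbedding.ofStrictMono (fun x => ⟨x.1, x.2⟩) (fun a b hab => hab)
        exact ⟨(g.dual.trans (subDualIso (codualSet S)).toOrderEmbedding).trans emb2⟩
      rw [RelEmbedding.wellFounded_iff_isEmpty, not_isEmpty_iff] at hwf
      obtain ⟨g⟩ := hwf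
      have hmono : StrictMono (fun n : ℕ => OrderDual.toDual (g n)) := by
        intro m n hmn
        exact g.map_rel_iff.2 hmn
      obtain ⟨e⟩ := aux_key hdual (OrderEmbedding.ofStrictMono _ hmono)
      exact ⟨(OrderIso.dualDual L).trans e.dual⟩
  · intro h S hS
    obtain he | he := h
    all_goals obtain ⟨e⟩ := he
    · exact aux_back e S hS
    · have e' : Lᵒᵈ ≃o ℕ := e.dual.trans (OrderIso.dualDual ℕ).symm
      obtain ⟨g⟩ := aux_back e' (dualSet S) (dualSet_infinite hS)
      have emb2 : ↥(dualSet (L := Lᵒᵈ) (dualSet S)) ↪o ↥S :=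
        OrderEmbedding.ofStrictMono (fun x => ⟨x.1, x.2⟩) (fun a b hab => hab)
      exact ⟨(OrderIso.dualDual L).toOrderEmbedding.trans
        ((g.dual.trans (subDualIso (L := Lᵒᵈ) (dualSet S)).toOrderEmbedding).trans emb2)⟩
end

section
/- (Sierpiński) Assume CH. Then no uncountable suborder of the reals is minimal: for every uncountable set X ⊆ ℝ there exists an uncountable Y ⊆ X such that there is no order embedding of X (with the order induced from ℝ) into Y. -/
open Cardinal Set

namespace Sierpinski13

/-- Two functions agreeing on the rationals agree at common continuity points. -/
lemma eq_at_cont {g₁ g₂ : ℝ → ℝ} (hq : ∀ q : ℚ, g₁ q = g₂ q) {x : ℝ}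
    (h₁ : ContinuousAt g₁ x) (h₂ : ContinuousAt g₂ x) : g₁ x = g₂ x := by
  have hx : x ∈ closure (Set.range ((↑) : ℚ → ℝ)) := by
    rw [Rat.denseRange_cast.closure_eq]; trivial
  obtain ⟨u, hu_mem, hu_tend⟩ := mem_closure_iff_seq_limit.1 hx
  have t1 : Filter.Tendsto (g₁ ∘ u) Filter.atTop (nhds (g₁ x)) := h₁.tendsto.comp hu_tend
  have t2 : Filter.Tendsto (g₂ ∘ u) Filter.atTop (nhds (g₂ x)) := h₂.tendsto.comp hu_tend
  refine tendsto_nhds_unique (t1.congr fun n => ?_) t2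
  obtain ⟨q, hq'⟩ := hu_mem n
  simp only [Function.comp_apply, ← hq', hq]

/-- There are at most continuum many monotone real functions. -/
lemma mk_monotone_le : #{g : ℝ → ℝ // Monotone g} ≤ 𝔠 := by
  classical
  have hD : ∀ g : {g : ℝ → ℝ // Monotone g}, ∃ e : ℕ → ℝ,
      ({x | ¬ContinuousAt g.1 x} ∪ {0}) = Set.range e := fun g =>
    ((g.2.countable_not_continuousAt.union (countable_singleton 0)).exists_eq_range
      ⟨0, Or.inr rfl⟩)
  choose e he using hD
  have hΦ : Function.Injective (fun g : {g : ℝ → ℝ // Monotone g} =>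
      ((fun q : ℚ => g.1 q, fun n => (e g n, g.1 (e g n))) : (ℚ → ℝ) × (ℕ → ℝ × ℝ))) := by
    intro g₁ g₂ hgg
    simp only [Prod.mk.injEq] at hgg
    obtain ⟨h1, h2⟩ := hgg
    have he12 : ∀ n, e g₁ n = e g₂ n := fun n => congrArg Prod.fst (congrFun h2 n)
    have hv12 : ∀ n, g₁.1 (e g₁ n) = g₂.1 (e g₂ n) := fun n => congrArg Prod.snd (congrFun h2 n)
    have hqeq : ∀ q : ℚ, g₁.1 q = g₂.1 q := fun q => congrFun h1 q
    apply Subtype.ext; funext x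
    by_cases hc1 : ContinuousAt g₁.1 x
    · by_cases hc2 : ContinuousAt g₂.1 x
      · exact eq_at_cont hqeq hc1 hc2
      · have : x ∈ Set.range (e g₂) := by rw [← he g₂]; exact Or.inl hc2
        obtain ⟨n, hn⟩ := this
        rw [← hn, ← he12 n, hv12 n, he12 n]
    · have : x ∈ Set.range (e g₁) := by rw [← he g₁]; exact Or.inl hc1
      obtain ⟨n, hn⟩ := this
      rw [← hn, hv12 n, he12 n]
  calc #{g : ℝ → ℝ // Monotone g} ≤ #((ℚ → ℝ) × (ℕ → ℝ × ℝ)) := mk_le_of_injective hΦ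
    _ = #(ℚ → ℝ) * #(ℕ → ℝ × ℝ) := by simp [mk_prod]
    _ = (#ℝ ^ #ℚ) * (#(ℝ × ℝ) ^ #ℕ) := by rw [power_def, power_def]
    _ = (𝔠 ^ ℵ₀) * (𝔠 ^ ℵ₀) := by
        rw [mk_real, Cardinal.mkRat, mk_nat, mk_prod]
        simp [mk_real, continuum_mul_self]
    _ = 𝔠 := by rw [continuum_power_aleph0, continuum_mul_self]

/-- Strictly monotone maps from a subset of ℝ to ℝ are no more numerous than
monotone real functions: extend by suprema after squashing into `Ioo (-1) 1`. -/
lemma mk_strictMono_le (X : Set ℝ) :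
    #{h : ↥X → ℝ // StrictMono h} ≤ #{g : ℝ → ℝ // Monotone g} := by
  classical
  set ψ : ℝ → ℝ := fun r => ((orderIsoIooNegOneOne ℝ r : Ioo (-1:ℝ) 1) : ℝ) with hψ
  have hψmono : StrictMono ψ := fun a b hab =>
    Subtype.coe_lt_coe.2 ((orderIsoIooNegOneOne ℝ).strictMono hab)
  have hψmem : ∀ r, ψ r ∈ Ioo (-1:ℝ) 1 := fun r => (orderIsoIooNegOneOne ℝ r).2
  set G : {h : ↥X → ℝ // StrictMono h} → ℝ → ℝ := fun h t =>
    sSup (insert (-1) ((fun x : ↥X => ψ (h.1 x)) '' {x : ↥X | (x:ℝ) ≤ t})) with hG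
  have hbdd : ∀ (h : {h : ↥X → ℝ // StrictMono h}) (t : ℝ), BddAbove (insert (-1:ℝ) ((fun x : ↥X => ψ (h.1 x)) '' {x : ↥X | (x:ℝ) ≤ t})) := by
    intro h t
    refine ⟨1, ?_⟩
    rintro y (rfl | ⟨x, -, rfl⟩)
    · norm_num
    · exact le_of_lt (hψmem _).2
  have hmono : ∀ (h : {h : ↥X → ℝ // StrictMono h}), Monotone (G h) := by
    intro h t t' htt'
    refine csSup_le_csSup (hbdd h t') (insert_nonempty _ _) ?_
    apply insert_subset_insert
    exact image_mono (fun x hx => le_trans hx htt')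
  have hval : ∀ (h : {h : ↥X → ℝ // StrictMono h}) (x : ↥X), G h ↑x = ψ (h.1 x) := by
    intro h x
    apply le_antisymm
    · refine csSup_le (insert_nonempty _ _) ?_
      rintro y (rfl | ⟨x', hx', rfl⟩)
      · exact le_of_lt (hψmem _).1
      · exact hψmono.monotone (h.2.monotone (Subtype.coe_le_coe.1 hx'))
    · exact le_csSup (hbdd h x) (Or.inr ⟨x, le_refl (x:ℝ), rfl⟩)
  apply mk_le_of_injective (f := fun h => (⟨G h, hmono h⟩ : {g : ℝ → ℝ // Monotone g}))
  intro h₁ h₂ hgg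
  apply Subtype.ext; funext x
  apply hψmono.injective
  rw [← hval h₁ x, ← hval h₂ x]
  exact congrFun (congrArg Subtype.val hgg) (x : ℝ)

lemma diff_ne : ∀ {A B : Set ℝ}, ¬A.Countable → B.Countable → (A \ B).Nonempty := by
  intro A B hA hB
  rcases Set.not_subset.1 (fun hsub => hA (hB.mono hsub)) with ⟨a, ha, ha'⟩
  exact ⟨a, ha, ha'⟩

/-- The transfinite recursion producing the "kill" points `z` and the "keep" points `w`. -/
lemma exists_pair {ι : Type} [LinearOrder ι] [WellFoundedLT ι]
    (hIio : ∀ i : ι, (Set.Iio i).Countable)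
    (A : ι → Set ℝ) (hA : ∀ i, ¬(A i).Countable)
    (X : Set ℝ) (hX : ¬X.Countable) :
    ∃ z w : ι → ℝ, (∀ i, z i ∈ A i) ∧ (∀ i, w i ∈ X) ∧
      Function.Injective w ∧ ∀ i j, w i ≠ z j := by
  classical
  have key : ∀ (i : ι) (prev : ∀ j, j < i → ℝ × ℝ), ∃ p : ℝ × ℝ,
      p.1 ∈ A i ∧ (∀ j (hj : j < i), p.1 ≠ (prev j hj).2) ∧
      p.2 ∈ X ∧ (∀ j (hj : j < i), p.2 ≠ (prev j hj).1) ∧ p.2 ≠ p.1 ∧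
      (∀ j (hj : j < i), p.2 ≠ (prev j hj).2) := by
    intro i prev
    haveI : Countable (Set.Iio i) := (hIio i).to_subtype
    have hWp : (Set.range (fun p : Set.Iio i => (prev p.1 p.2).2)).Countable :=
      countable_range _
    have hZp : (Set.range (fun p : Set.Iio i => (prev p.1 p.2).1)).Countable :=
      countable_range _
    obtain ⟨z, hzA, hzW⟩ := diff_ne (hA i) hWp
    obtain ⟨w, hwX, hw'⟩ := diff_ne hX (((hZp.union hWp).insert z))
    refine ⟨(z, w), hzA, ?_, hwX, ?_, ?_, ?_⟩
    · intro j hj h; exact hzW ⟨⟨j, hj⟩, h.symm⟩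
    · intro j hj h; exact hw' (Or.inr (Or.inl ⟨⟨j, hj⟩, h.symm⟩))
    · intro h; exact hw' (Or.inl h)
    · intro j hj h; exact hw' (Or.inr (Or.inr ⟨⟨j, hj⟩, h.symm⟩))
  choose F hF using key
  set P : ι → ℝ × ℝ := WellFounded.fix wellFounded_lt F with hPdef
  have hP : ∀ i, P i = F i (fun j _ => P j) := by
    intro i; rw [hPdef]; exact WellFounded.fix_eq _ _ _
  have spec : ∀ i, (P i).1 ∈ A i ∧ (∀ j (_ : j < i), (P i).1 ≠ (P j).2) ∧
      (P i).2 ∈ X ∧ (∀ j (_ : j < i), (P i).2 ≠ (P j).1) ∧ (P i).2 ≠ (P i).1 ∧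
      (∀ j (_ : j < i), (P i).2 ≠ (P j).2) := by
    intro i
    have h := hF i (fun j _ => P j)
    rw [← hP i] at h
    exact h
  refine ⟨fun i => (P i).1, fun i => (P i).2, fun i => (spec i).1, fun i => (spec i).2.2.1,
    ?_, ?_⟩
  · intro a b hab
    by_contra hne
    rcases lt_or_gt_of_ne hne with h | h
    · exact (spec b).2.2.2.2.2 a h hab.symm
    · exact (spec a).2.2.2.2.2 b h hab
  · intro i j
    rcases lt_trichotomy i j with h | rfl | h
    · exact fun hh => (spec j).2.1 i h hh.symm
    · exact (spec i).2.2.2.2.1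
    · exact (spec i).2.2.2.1 j h

end Sierpinski13

/-- **Sierpiński.** Assume CH.  Then no uncountable suborder of the reals is minimal:
every uncountable `X ⊆ ℝ` has an uncountable subset `Y ⊆ X` such that `X` does not
order-embed into `Y`. -/
theorem statement13 (hCH : Cardinal.mk ℝ = Cardinal.aleph 1)
    (X : Set ℝ) (hX : ¬ X.Countable) :
    ∃ Y : Set ℝ, Y ⊆ X ∧ ¬ Y.Countable ∧ ¬ Nonempty (↥X ↪o ↥Y) := by
  classical
  set ι := (Cardinal.aleph 1).ord.ToType with hιdef
  have hι : #ι = Cardinal.aleph 1 := by rw [hιdef, Cardinal.mk_toType, Cardinal.card_ord]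
  have hIio : ∀ i : ι, (Set.Iio i).Countable := fun i =>
    (Cardinal.countable_iff_lt_aleph_one _).2 (Cardinal.mk_Iio_ord_toType i)
  have hS : #{h : ↥X → ℝ // StrictMono h} ≤ #ι := by
    rw [hι]
    calc #{h : ↥X → ℝ // StrictMono h} ≤ #{g : ℝ → ℝ // Monotone g} :=
          Sierpinski13.mk_strictMono_le X
      _ ≤ Cardinal.continuum := Sierpinski13.mk_monotone_le
      _ = #ℝ := Cardinal.mk_real.symm
      _ = Cardinal.aleph 1 := hCH
  haveI : Nonempty {h : ↥X → ℝ // StrictMono h} :=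
    ⟨⟨fun x => (x : ℝ), fun a b h => Subtype.coe_lt_coe.2 h⟩⟩
  obtain ⟨emb⟩ := Cardinal.le_def _ _ |>.mp hS
  have hσ : Function.Surjective (Function.invFun emb) := Function.invFun_surjective emb.injective
  set σ : ι → {h : ↥X → ℝ // StrictMono h} := Function.invFun emb with hσdef
  have hA : ∀ i : ι, ¬(Set.range ((σ i).1)).Countable := by
    intro i hc
    have h1 : #(Set.range ((σ i).1)) = #↥X := Cardinal.mk_range_eq _ (σ i).2.injective
    have h2 : Countable ↥X := by
      rw [← Cardinal.mk_le_aleph0_iff, ← h1, Cardinal.mk_le_aleph0_iff]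
      exact hc.to_subtype
    exact hX (Set.countable_coe_iff.1 h2)
  obtain ⟨z, w, hz, hw, hwinj, hwz⟩ :=
    Sierpinski13.exists_pair hIio (fun i => Set.range ((σ i).1)) hA X hX
  refine ⟨X \ Set.range z, Set.diff_subset, ?_, ?_⟩
  · intro hc
    have hsub : Set.range w ⊆ X \ Set.range z := by
      rintro _ ⟨i, rfl⟩
      exact ⟨hw i, fun ⟨j, hj⟩ => hwz i j hj.symm⟩
    have hcc : (Set.range w).Countable := hc.mono hsub
    rw [Cardinal.countable_iff_lt_aleph_one, Cardinal.mk_range_eq _ hwinj, hι] at hcc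
    exact lt_irrefl _ hcc
  · rintro ⟨f⟩
    have hsm : StrictMono (fun x : ↥X => ((f x : ↥(X \ Set.range z)) : ℝ)) :=
      fun a b hab => Subtype.coe_lt_coe.2 (f.strictMono hab)
    obtain ⟨i, hi⟩ := hσ ⟨_, hsm⟩
    have hzi : z i ∈ Set.range ((σ i).1) := hz i
    rw [hi] at hzi
    obtain ⟨x, hx⟩ := hzi
    exact (f x).2.2 ⟨i, hx.symm⟩
end
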